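/- Let x be an alcove and i, j ∈ {1,...,n} with i, j ≠ P(x)(1). Then i ⊴_x j if and only if c^{-1}(i) ⊴_{rot(x)} c^{-1}(j). Moreover, if P(x)(1) ⊴_x j then c^{-1}(P(x)(1)) ⊴_{rot(x)} c^{-1}(j). -/
import Mathlib
set_option linter.all false


open Finset

/-- Standard basis vector `e_j` in `ℤⁿ`. -/
def ev (n : ℕ) (j : Fin n) : Fin n → ℤ := fun k => if k = j then 1 else 0

/-- The coweight `ϖ_t = e_1 + ⋯ + e_t` (t ones followed by zeros). -/
def varpi (n t : ℕ) : Fin n → ℤ := fun j => if (j : ℕ) < t then 1 else 0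

/-- Dominance order `μ ⪯ λ`: equal total sums, partial sums of `μ` bounded by those of `λ`. -/
def DomLE {n : ℕ} (μ lam : Fin n → ℤ) : Prop :=
  (∑ i, μ i = ∑ i, lam i) ∧
  ∀ k : Fin n, ∑ i ∈ Finset.Iic k, μ i ≤ ∑ i ∈ Finset.Iic k, lam i

/-- A coweight is dominant iff its coordinates are weakly decreasing. -/
def IsDominant {n : ℕ} (v : Fin n → ℤ) : Prop := ∀ i j : Fin n, i ≤ j → v j ≤ v i

/-- The weakly decreasing rearrangement `dom(v)` of `v`. -/
noncomputable def domOf {n : ℕ} (v : Fin n → ℤ) : Fin n → ℤ :=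
  v ∘ Tuple.sort (fun i => -v i)

/-- `succA x i` is `x^{(i+1)}`, with the convention `x^{(n+1)} = x^{(1)} + (1,…,1)`. -/
def succA {n : ℕ} (x : Fin n → Fin n → ℤ) (i : Fin n) : Fin n → ℤ :=
  if h : (i : ℕ) + 1 < n then x ⟨(i : ℕ) + 1, h⟩ else fun j => x ⟨0, i.pos⟩ j + 1

/-- A tuple `(x^{(1)},…,x^{(n)})` is an alcove. -/
def IsAlcove {n : ℕ} (x : Fin n → Fin n → ℤ) : Prop :=
  (∀ i : Fin n, ∀ j, x i j ≤ succA x i j) ∧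
  (∀ i : Fin n, (i : ℕ) + 1 < n → ∑ j, succA x i j = (∑ j, x i j) + 1)

/-- `P` is the permutation `P(x)` of the alcove `x`: `x^{(i+1)} = x^{(i)} + e_{P(x)(i)}`. -/
def IsPermOf {n : ℕ} (x : Fin n → Fin n → ℤ) (P : Equiv.Perm (Fin n)) : Prop :=
  ∀ i : Fin n, ∀ j, succA x i j = x i j + ev n (P i) j

/-- A permutation acts on `ℤⁿ` by permuting coordinates: `(σv)_{σ(i)} = v_i`. -/
def permAct {n : ℕ} (σ : Equiv.Perm (Fin n)) (v : Fin n → ℤ) : Fin n → ℤ :=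
  fun j => v (σ.symm j)

/-- The `n`-cycle `c = (1 2 ⋯ n)`. -/
def cyc (n : ℕ) [NeZero n] : Equiv.Perm (Fin n) := Equiv.addRight 1

/-- Rotation of alcoves. -/
def rotA {n : ℕ} [NeZero n] (x : Fin n → Fin n → ℤ) : Fin n → Fin n → ℤ := fun i =>
  if h : (i : ℕ) + 1 < n then
    permAct (cyc n)⁻¹ (fun j => x ⟨(i : ℕ) + 1, h⟩ j - varpi n 1 j)
  else
    fun j => permAct (cyc n)⁻¹ (x 0) j + varpi n (n - 1) j

/-- An alcove is `λ`-permissible if `dom(x^{(i)} - ϖ_{i-1}) ⪯ λ` for all `i`. -/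
noncomputable def Permissible {n : ℕ} (lam : Fin n → ℤ) (x : Fin n → Fin n → ℤ) : Prop :=
  ∀ i : Fin n, DomLE (domOf (fun j => x i j - varpi n (i : ℕ) j)) lam

/-- The Kottwitz–Rapoport relation `i ⊴_x j` (six-case rule). -/
def TriLE {n : ℕ} (x : Fin n → Fin n → ℤ) (P : Equiv.Perm (Fin n)) (i j : Fin n) : Prop :=
  (x ⟨0, i.pos⟩ j < x ⟨0, i.pos⟩ i) ∨
  (x ⟨0, i.pos⟩ i = x ⟨0, i.pos⟩ j ∧
    ((P.symm i < i ∧ P.symm j < j ∧ j ≤ i) ∨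
     (P.symm i < i ∧ j ≤ P.symm j) ∨
     (P.symm i = i ∧ P.symm j = j ∧ i = j) ∨
     (P.symm i = i ∧ j < P.symm j) ∨
     (i < P.symm i ∧ j < P.symm j ∧ j ≤ i)))
lemma cyc_apply (n : ℕ) [NeZero n] (k : Fin n) : cyc n k = k + 1 := rfl

lemma cyc_symm_apply (n : ℕ) [NeZero n] (k : Fin n) : (cyc n).symm k = k - 1 := by
  simp [cyc, sub_eq_add_neg]

lemma addone_val (m : ℕ) (k : Fin (m+2)) :
    ((k+1 : Fin (m+2)) : ℕ) = if (k:ℕ) = m+1 then 0 else (k:ℕ)+1 := by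
  rw [Fin.val_add, Fin.val_one]
  split_ifs with h
  · rw [h]; simp
  · exact Nat.mod_eq_of_lt (by omega)

lemma subone_val (m : ℕ) (k : Fin (m+2)) :
    ((k-1 : Fin (m+2)) : ℕ) = if (k:ℕ) = 0 then m+1 else (k:ℕ)-1 := by
  rw [Fin.sub_def]
  simp only [Fin.val_one]
  split_ifs with h
  · rw [h]; simp [Nat.mod_eq_of_lt]
  · have h2 : (m+2-1) + (k:ℕ) = ((k:ℕ)-1) + (m+2) := by omega
    rw [h2, Nat.add_mod_right, Nat.mod_eq_of_lt (by omega)]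

lemma permAct_cycinv (n : ℕ) [NeZero n] (v : Fin n → ℤ) (j : Fin n) :
    permAct (cyc n)⁻¹ v j = v (j + 1) := rfl

set_option maxHeartbeats 2000000 in
lemma perm_rot (m : ℕ) (x : Fin (m+2) → Fin (m+2) → ℤ)
    (P P' : Equiv.Perm (Fin (m+2))) (hP : IsPermOf x P) (hP' : IsPermOf (rotA x) P')
    (i : Fin (m+2)) : P' i = (cyc (m+2)).symm (P (cyc (m+2) i)) := by
  set j0 := (cyc (m+2)).symm (P (cyc (m+2) i)) with hj0
  have hc1 : j0 + 1 = P (cyc (m+2) i) := by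
    rw [hj0, cyc_symm_apply]; exact sub_add_cancel _ _
  have hvj := j0.isLt
  have key : succA (rotA x) i j0 = rotA x i j0 + 1 := by
    by_cases h1 : (i:ℕ)+1 < m+2
    · have hci : cyc (m+2) i = ⟨(i:ℕ)+1, h1⟩ := by
        apply Fin.ext; rw [cyc_apply, addone_val, if_neg (by omega)]
      by_cases h2 : (i:ℕ)+1+1 < m+2
      · have e1 : succA (rotA x) i j0 = rotA x ⟨(i:ℕ)+1, h1⟩ j0 := by
          simp [succA, h1]
        have e2 : rotA x ⟨(i:ℕ)+1, h1⟩ j0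
            = x ⟨(i:ℕ)+1+1, h2⟩ (j0+1) - varpi (m+2) 1 (j0+1) := by
          simp [rotA, h2, permAct_cycinv]
        have e3 : rotA x i j0 = x ⟨(i:ℕ)+1, h1⟩ (j0+1) - varpi (m+2) 1 (j0+1) := by
          simp [rotA, h1, permAct_cycinv]
        have e4 := hP ⟨(i:ℕ)+1, h1⟩ (j0+1)
        rw [show succA x ⟨(i:ℕ)+1, h1⟩ = x ⟨(i:ℕ)+1+1, h2⟩ from by simp [succA, h2]] at e4
        have e5 : ev (m+2) (P ⟨(i:ℕ)+1, h1⟩) (j0+1) = 1 := by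
          rw [← hci, ev, if_pos hc1]
        rw [e1, e2, e3, e4, e5]; ring
      · have e1 : succA (rotA x) i j0 = rotA x ⟨(i:ℕ)+1, h1⟩ j0 := by
          simp [succA, h1]
        have e2 : rotA x ⟨(i:ℕ)+1, h1⟩ j0
            = x 0 (j0+1) + varpi (m+2) (m+1) j0 := by
          simp [rotA, h2, permAct_cycinv]
        have e3 : rotA x i j0 = x ⟨(i:ℕ)+1, h1⟩ (j0+1) - varpi (m+2) 1 (j0+1) := by
          simp [rotA, h1, permAct_cycinv]
        have e4 := hP ⟨(i:ℕ)+1, h1⟩ (j0+1)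
        rw [show succA x ⟨(i:ℕ)+1, h1⟩ = fun j => x 0 j + 1 from by simp [succA, h2]] at e4
        have e5 : ev (m+2) (P ⟨(i:ℕ)+1, h1⟩) (j0+1) = 1 := by
          rw [← hci, ev, if_pos hc1]
        have hv : varpi (m+2) (m+1) j0 + varpi (m+2) 1 (j0+1) = 1 := by
          simp only [varpi, addone_val]
          split_ifs <;> omega
        simp only at e4
        rw [e1, e2, e3]
        rw [e5] at e4
        omega
    · have hlast : (i:ℕ) = m+1 := by have := i.isLt; omega
      have hci : cyc (m+2) i = 0 := by
        apply Fin.ext; rw [cyc_apply, addone_val, if_pos hlast]; rfl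
      have e1 : succA (rotA x) i j0 = rotA x 0 j0 + 1 := by
        simp [succA, h1]
      have e2 : rotA x 0 j0 = x ⟨1, by omega⟩ (j0+1) - varpi (m+2) 1 (j0+1) := by
        simp [rotA, permAct_cycinv]
      have e3 : rotA x i j0 = x 0 (j0+1) + varpi (m+2) (m+1) j0 := by
        simp [rotA, h1, permAct_cycinv]
      have e4 := hP 0 (j0+1)
      rw [show succA x 0 = x ⟨1, by omega⟩ from by simp [succA]] at e4
      have e5 : ev (m+2) (P 0) (j0+1) = 1 := by
        rw [← hci, ev, if_pos hc1]
      have hv : varpi (m+2) (m+1) j0 + varpi (m+2) 1 (j0+1) = 1 := by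
        simp only [varpi, addone_val]
        split_ifs <;> omega
      rw [e1, e2, e3]
      rw [e5] at e4
      omega
  have h6 := hP' i j0
  rw [key] at h6
  have hev : ev (m+2) (P' i) j0 = 1 := by omega
  by_contra hne
  rw [ev, if_neg (fun h => hne h.symm)] at hev
  exact one_ne_zero hev.symm

lemma rot0 (m : ℕ) (x : Fin (m+2) → Fin (m+2) → ℤ) (P : Equiv.Perm (Fin (m+2)))
    (hP : IsPermOf x P) (k : Fin (m+2)) :
    rotA x 0 (k - 1)
      = x 0 k + (if (k:ℕ) = ((P 0 : Fin (m+2)) : ℕ) then 1 else 0)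
        - (if (k:ℕ) = 0 then 1 else 0) := by
  have e2 : rotA x 0 (k-1)
      = x ⟨1, by omega⟩ ((k-1)+1) - varpi (m+2) 1 ((k-1)+1) := by
    simp [rotA, permAct_cycinv]
  rw [sub_add_cancel] at e2
  have e4 := hP 0 k
  rw [show succA x 0 = x ⟨1, by omega⟩ from by simp [succA]] at e4
  rw [e2, e4, ev, varpi]
  have : ((k = P 0) ↔ ((k:ℕ) = ((P 0 : Fin (m+2)) : ℕ))) := Fin.ext_iff
  have h2 : (((k:ℕ) < 1) ↔ ((k:ℕ) = 0)) := Nat.lt_one_iff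
  rw [if_congr this rfl rfl, if_congr h2 rfl rfl]
set_option maxHeartbeats 2000000 in
theorem triLE_rot_compare (n : ℕ) [NeZero n] (x : Fin n → Fin n → ℤ) (hx : IsAlcove x)
    (P P' : Equiv.Perm (Fin n)) (hP : IsPermOf x P) (hP' : IsPermOf (rotA x) P') :
    (∀ i j : Fin n, i ≠ P 0 → j ≠ P 0 →
      (TriLE x P i j ↔ TriLE (rotA x) P' ((cyc n).symm i) ((cyc n).symm j))) ∧
    (∀ j : Fin n, TriLE x P (P 0) j →
      TriLE (rotA x) P' ((cyc n).symm (P 0)) ((cyc n).symm j)) := by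
  rcases Nat.lt_or_ge n 2 with hn | hn
  · have hn1 : n = 1 := by have := Nat.pos_of_ne_zero (NeZero.ne n); omega
    subst hn1
    refine ⟨fun i j hi _ => absurd (Subsingleton.elim i (P 0)) hi, fun j _ => ?_⟩
    exact Or.inr ⟨congrArg _ (Subsingleton.elim _ _),
      Or.inr (Or.inr (Or.inl ⟨Subsingleton.elim _ _, Subsingleton.elim _ _,
        Subsingleton.elim _ _⟩))⟩
  · obtain ⟨m, rfl⟩ : ∃ m, n = m + 2 := ⟨n - 2, by omega⟩
    have hP'e : P' = (cyc (m+2)).trans (P.trans (cyc (m+2)).symm) :=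
      Equiv.ext (perm_rot m x P P' hP hP')
    have hPs : ∀ k : Fin (m+2), P'.symm (k - 1) = P.symm k - 1 := by
      intro k
      rw [← cyc_symm_apply, ← cyc_symm_apply, hP'e]
      simp
    have hz : ∀ h : 0 < m+2, (⟨0, h⟩ : Fin (m+2)) = 0 := fun _ => rfl
    have hr0 := rot0 m x P hP
    constructor
    · intro i j hi hj
      have hI := i.isLt
      have hJ := j.isLt
      have hA := (P.symm i).isLt
      have hB := (P.symm j).isLt
      have hp := (P 0).isLt
      have hAne : ((P.symm i : Fin (m+2)) : ℕ) ≠ 0 := by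
        intro h
        exact hi ((Equiv.symm_apply_eq P).mp (Fin.ext (h.trans (Fin.val_zero _).symm)))
      have hBne : ((P.symm j : Fin (m+2)) : ℕ) ≠ 0 := by
        intro h
        exact hj ((Equiv.symm_apply_eq P).mp (Fin.ext (h.trans (Fin.val_zero _).symm)))
      have hinj : (((P.symm i) : ℕ) = ((P.symm j) : ℕ)) ↔ ((i:ℕ) = (j:ℕ)) := by
        rw [← Fin.ext_iff, ← Fin.ext_iff, EmbeddingLike.apply_eq_iff_eq]
      have hip : (i:ℕ) ≠ ((P 0 : Fin (m+2)):ℕ) := fun h => hi (Fin.ext h)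
      have hjp : (j:ℕ) ≠ ((P 0 : Fin (m+2)):ℕ) := fun h => hj (Fin.ext h)
      simp only [TriLE, hz, cyc_symm_apply, hr0, hPs, Fin.lt_def, Fin.le_def, Fin.ext_iff,
        subone_val, Fin.val_zero, hAne, hBne, hip, hjp, if_false]
      split_ifs <;> omega
    · intro j hT
      have hJ := j.isLt
      have hB := (P.symm j).isLt
      have hp := (P 0).isLt
      have hBp : (((P.symm j):ℕ) = 0) ↔ ((j:ℕ) = ((P 0 : Fin (m+2)):ℕ)) := by
        constructor
        · intro h
          exact Fin.ext_iff.mp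
            ((Equiv.symm_apply_eq P).mp (Fin.ext (h.trans (Fin.val_zero _).symm)))
        · intro h
          rw [(Equiv.symm_apply_eq P).mpr (Fin.ext h)]
          rfl
      simp only [TriLE, hz, cyc_symm_apply, hr0, hPs, Fin.lt_def, Fin.le_def, Fin.ext_iff,
        subone_val, Fin.val_zero, Equiv.symm_apply_apply] at hT ⊢
      split_ifs <;> omega
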